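/- Let x be a point in n-dimensional Euclidean space, L > 0, and let y be a point on the sphere S(x,L) of radius L centered at x. Let N = {e_1,...,e_n} be an orthonormal basis. If 0 < l < 2L/√n, then at least one of the 2n points {y ± l·e_k : k = 1,...,n} lies in the open ball B(x,L). -/

import Mathlib

/-- if `y` is on the sphere `S(x,L)` in `ℝⁿ`, `N` an orthonormal basis, and
`0 < l < 2L/√n`, then one of the `2n` points `y ± l • e_k` lies in the open ball `B(x,L)`. -/
theorem stmt_0 (n : ℕ) (L l : ℝ) (hL : 0 < L)
    (x y : EuclideanSpace ℝ (Fin n))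
    (N : OrthonormalBasis (Fin n) ℝ (EuclideanSpace ℝ (Fin n)))
    (hy : ‖y - x‖ = L)
    (hl : 0 < l) (hl' : l < 2 * L / Real.sqrt n) :
    ∃ k : Fin n, ∃ s : ℝ, (s = 1 ∨ s = -1) ∧ ‖(y + (s * l) • N k) - x‖ < L := by
  have hn : 0 < n := by
    rcases Nat.eq_zero_or_pos n with h | h
    · exfalso
      subst h
      have : y - x = 0 := Subsingleton.elim _ _
      rw [this, norm_zero] at hy
      linarith
    · exact h
  have hsqn : (0:ℝ) < Real.sqrt n := Real.sqrt_pos.mpr (by positivity)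
  set c : Fin n → ℝ := fun k => inner ℝ (N k) (y - x) with hc
  have hsum : ∑ k, (c k)^2 = L^2 := by
    have h1 : ∑ k, (c k)^2 = ‖y - x‖^2 := by
      have := N.sum_inner_mul_inner (y - x) (y - x)
      rw [real_inner_self_eq_norm_sq] at this
      rw [← this]
      apply Finset.sum_congr rfl
      intro i _
      rw [hc]
      simp only []
      rw [sq, real_inner_comm]
    rw [h1, hy]
  -- there is k with (c k)^2 ≥ L^2 / n
  have hexists : ∃ k : Fin n, L^2 / n ≤ (c k)^2 := by
    by_contra h
    push_neg at h
    have : ∑ k, (c k)^2 < ∑ _k : Fin n, L^2 / n :=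
      Finset.sum_lt_sum_of_nonempty (by simp [Finset.univ_nonempty_iff, Fin.pos_iff_nonempty.mp hn])
        (fun i _ => h i)
    rw [hsum, Finset.sum_const, Finset.card_univ, Fintype.card_fin, nsmul_eq_mul] at this
    rw [mul_div_cancel₀] at this
    · exact lt_irrefl _ this
    · positivity
  obtain ⟨k, hk⟩ := hexists
  have habs : L / Real.sqrt n ≤ |c k| := by
    have h1 : (L / Real.sqrt n)^2 = L^2 / n := by
      rw [div_pow, Real.sq_sqrt (by positivity)]
    have h0 : 0 ≤ L / Real.sqrt n := by positivity
    nlinarith [abs_nonneg (c k), sq_abs (c k), hk, h1]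
  refine ⟨k, if 0 ≤ c k then -1 else 1, ?_, ?_⟩
  · split <;> simp
  · set s : ℝ := if 0 ≤ c k then -1 else 1 with hs
    have hslck : s * c k = -|c k| := by
      rw [hs]
      split
      · rw [abs_of_nonneg ‹_›]; ring
      · rw [abs_of_neg (lt_of_not_ge ‹_›)]; ring
    have hs2 : s^2 = 1 := by rw [hs]; split <;> norm_num
    have key : ‖(y + (s * l) • N k) - x‖^2 < L^2 := by
      have heq : (y + (s * l) • N k) - x = (y - x) + (s * l) • N k := by abel
      rw [heq, norm_add_sq_real]
      have hinner : inner ℝ (y - x) ((s * l) • N k) = (s * l) * c k := by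
        rw [real_inner_smul_right, real_inner_comm]
      rw [hinner, norm_smul, Real.norm_eq_abs, N.orthonormal.1 k, mul_one, hy]
      have h1 : (s * l) * c k = l * (s * c k) := by ring
      rw [h1, hslck]
      have h2 : |s * l|^2 = l^2 := by
        rw [sq_abs, mul_pow, hs2, one_mul]
      rw [h2]
      have hlab : l < 2 * |c k| := by
        calc l < 2 * L / Real.sqrt n := hl'
        _ = 2 * (L / Real.sqrt n) := by ring
        _ ≤ 2 * |c k| := by linarith
      nlinarith
    exact lt_of_pow_lt_pow_left₀ 2 hL.le key
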